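/- Let m₁, m₂, τ be positive real numbers with m₁ < m₂, and define A_τ := { (x,y) ∈ ℝ² : τ ≤ y, m₁x ≤ y, and m₁(x - τ/m₂) ≥ y - τ }. Then ∫_{A_τ} (1/(xy)) dx dy ≤ m₂/m₁ - 1; in particular the integral is finite. -/

import Mathlib

open MeasureTheory
open scoped ENNReal

/-- The integral of `1/(xy)` over the strip
`A_τ = {(x,y) : τ ≤ y, m₁x ≤ y, m₁(x - τ/m₂) ≥ y - τ}` is at most `m₂/m₁ - 1`;
in particular it is finite. -/
theorem strip_integral_bound (m₁ m₂ τ : ℝ)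
    (hm₁ : 0 < m₁) (hm₂ : 0 < m₂) (hm : m₁ < m₂) (hτ : 0 < τ) :
    (∫⁻ p in {p : ℝ × ℝ | τ ≤ p.2 ∧ m₁ * p.1 ≤ p.2 ∧ p.2 - τ ≤ m₁ * (p.1 - τ / m₂)},
        ENNReal.ofReal (1 / (p.1 * p.2))) ≤ ENNReal.ofReal (m₂ / m₁ - 1) := by
  set c : ℝ := τ * (m₂ - m₁) / m₂ with hc
  have hc0 : 0 < c := by
    apply div_pos (mul_pos hτ (by linarith)) hm₂
  set S : Set (ℝ × ℝ) :=
    {p : ℝ × ℝ | τ ≤ p.2 ∧ m₁ * p.1 ≤ p.2 ∧ p.2 - τ ≤ m₁ * (p.1 - τ / m₂)} with hS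
  set B : Set (ℝ × ℝ) := {p : ℝ × ℝ | τ ≤ p.2 ∧ (p.2 - c) / m₁ ≤ p.1 ∧ p.1 ≤ p.2 / m₁}
    with hB
  set f : ℝ × ℝ → ℝ≥0∞ := fun p => ENNReal.ofReal (m₂ / p.2 ^ 2) with hf
  have hSmeas : MeasurableSet S := by
    apply MeasurableSet.inter (measurableSet_le measurable_const measurable_snd)
    apply MeasurableSet.inter
    · exact measurableSet_le (measurable_fst.const_mul m₁) measurable_snd
    · exact measurableSet_le (measurable_snd.sub measurable_const)
        ((measurable_fst.sub measurable_const).const_mul m₁)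
  have hBmeas : MeasurableSet B := by
    apply MeasurableSet.inter (measurableSet_le measurable_const measurable_snd)
    exact MeasurableSet.inter
      (measurableSet_le ((measurable_snd.sub measurable_const).div_const m₁) measurable_fst)
      (measurableSet_le measurable_fst (measurable_snd.div_const m₁))
  have hfmeas : Measurable f :=
    (measurable_const.div (measurable_snd.pow_const 2)).ennreal_ofReal
  -- Step 1: pointwise domination
  have step1 : (∫⁻ p in S, ENNReal.ofReal (1 / (p.1 * p.2))) ≤ ∫⁻ p, B.indicator f p := by
    rw [← lintegral_indicator hSmeas _]
    apply lintegral_mono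
    intro p
    by_cases hp : p ∈ S
    · obtain ⟨h1, h2, h3⟩ := Set.mem_setOf.mp (hS ▸ hp)
      have hy : 0 < p.2 := lt_of_lt_of_le hτ h1
      have hceq : c = τ - m₁ * (τ / m₂) := by
        rw [hc]; field_simp
      have h3' : p.2 - τ ≤ m₁ * p.1 - m₁ * (τ / m₂) := by
        rw [← mul_sub]; exact h3
      have hx1 : (p.2 - c) / m₁ ≤ p.1 := by
        rw [div_le_iff₀ hm₁]
        nlinarith [h3', hceq]
      have hx2 : p.1 ≤ p.2 / m₁ := (le_div_iff₀ hm₁).2 (by linarith [h2])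
      have hpB : p ∈ B := by rw [hB]; exact ⟨h1, hx1, hx2⟩
      rw [Set.indicator_of_mem hp, Set.indicator_of_mem hpB]
      apply ENNReal.ofReal_le_ofReal
      -- x ≥ (y - c)/m₁ ≥ y/m₂
      have hxge : p.2 / m₂ ≤ p.1 := by
        refine le_trans ?_ hx1
        rw [div_le_div_iff₀ hm₂ hm₁]
        have : c * m₂ = τ * (m₂ - m₁) := by rw [hc]; field_simp
        nlinarith [h1]
      have hx0 : 0 < p.1 := lt_of_lt_of_le (div_pos hy hm₂) hxge
      have hxge' : p.2 ≤ m₂ * p.1 := by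
        rw [div_le_iff₀ hm₂] at hxge; linarith
      rw [div_le_div_iff₀ (by positivity) (by positivity)]
      nlinarith [mul_le_mul_of_nonneg_right hxge' (le_of_lt hy)]
    · rw [Set.indicator_of_notMem hp]
      exact zero_le
  refine le_trans step1 ?_
  -- Step 2: Tonelli
  have hmeasInd : Measurable (B.indicator f) := hfmeas.indicator hBmeas
  rw [show (volume : Measure (ℝ × ℝ)) = (volume : Measure ℝ).prod volume from
        (MeasureTheory.Measure.volume_eq_prod ℝ ℝ),
      MeasureTheory.lintegral_prod_symm' _ hmeasInd]
  have inner : ∀ y : ℝ, (∫⁻ x, B.indicator f (x, y)) =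
      (Set.Ici τ).indicator (fun y => ENNReal.ofReal (m₂ / y ^ 2) * ENNReal.ofReal (c / m₁)) y := by
    intro y
    by_cases hy : τ ≤ y
    · have key : ∀ x : ℝ, B.indicator f (x, y) =
          (Set.Icc ((y - c) / m₁) (y / m₁)).indicator
            (fun _ => ENNReal.ofReal (m₂ / y ^ 2)) x := by
        intro x
        by_cases hx : x ∈ Set.Icc ((y - c) / m₁) (y / m₁)
        · rw [Set.indicator_of_mem hx, Set.indicator_of_mem (show (x, y) ∈ B from by rw [hB]; exact ⟨hy, hx.1, hx.2⟩)]
        · rw [Set.indicator_of_notMem hx, Set.indicator_of_notMem]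
          intro hmem
          exact hx ⟨hmem.2.1, hmem.2.2⟩
      simp_rw [key]
      rw [lintegral_indicator measurableSet_Icc _, setLIntegral_const, Real.volume_Icc,
        Set.indicator_of_mem (Set.mem_Ici.mpr hy)]
      congr 2
      rw [div_sub_div_same]
      ring_nf
    · rw [Set.indicator_of_notMem (by simpa using hy)]
      have : ∀ x : ℝ, B.indicator f (x, y) = 0 := by
        intro x
        apply Set.indicator_of_notMem
        intro hmem
        exact hy hmem.1
      simp [this]
  simp_rw [inner]
  rw [lintegral_indicator measurableSet_Ici _]
  have hIoiIci : (∫⁻ y in Set.Ici τ,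
        ENNReal.ofReal (m₂ / y ^ 2) * ENNReal.ofReal (c / m₁)) =
      ∫⁻ y in Set.Ioi τ, ENNReal.ofReal (m₂ / y ^ 2) * ENNReal.ofReal (c / m₁) :=
    (setLIntegral_congr (Filter.EventuallyEq.symm Ioi_ae_eq_Ici))
  rw [hIoiIci]
  set K : ℝ := m₂ * c / m₁ with hK
  have hK0 : 0 < K := by positivity
  have hcongr : ∀ y ∈ Set.Ioi τ,
      ENNReal.ofReal (m₂ / y ^ 2) * ENNReal.ofReal (c / m₁)
        = ENNReal.ofReal (K * y ^ (-2 : ℝ)) := by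
    intro y hy
    have hy0 : 0 < y := lt_trans hτ hy
    rw [← ENNReal.ofReal_mul (by positivity)]
    congr 1
    rw [Real.rpow_neg hy0.le, Real.rpow_two]
    field_simp [hK]
    rw [hK]; field_simp
  rw [setLIntegral_congr_fun measurableSet_Ioi hcongr]
  have hint : IntegrableOn (fun y : ℝ => y ^ (-2 : ℝ)) (Set.Ioi τ) :=
    integrableOn_Ioi_rpow_of_lt (by norm_num) hτ
  have hintK : IntegrableOn (fun y : ℝ => K * y ^ (-2 : ℝ)) (Set.Ioi τ) := hint.const_mul K
  rw [← ofReal_integral_eq_lintegral_ofReal hintK]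
  · rw [MeasureTheory.integral_const_mul, integral_Ioi_rpow_of_lt (by norm_num) hτ]
    apply ENNReal.ofReal_le_ofReal
    rw [show (-2 : ℝ) + 1 = -1 by norm_num, Real.rpow_neg_one]
    have heq : K * (-τ⁻¹ / -1) = m₂ / m₁ - 1 := by
      rw [hK, hc]; field_simp
    rw [heq]
  · filter_upwards [self_mem_ae_restrict measurableSet_Ioi] with y hy
    have : (0:ℝ) < y := lt_trans hτ hy
    positivity
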